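/- Let d : ℝ → ℝ satisfy the Leibniz rule d(xy) = x·d(y) + y·d(x) for all x, y ∈ ℝ, and let U ⊆ ℝ be a set such that for every t ∈ ℝ \ {0, −1} the set H_t := {t, 1/t, −1 − 1/t, −t/(1+t), −1/(1+t), −1 − t} intersects U. Assume that d(u) = d(u+1) for all u ∈ U. Then d is additive, i.e., d(x+y) = d(x) + d(y) for all x, y ∈ ℝ, and hence d is a standard derivation. -/

import Mathlib

/-- Basic Lemma: if `d : ℝ → ℝ` satisfies the Leibniz rule, `U ⊆ ℝ` intersects the set
`H_t = {t, 1/t, -1-1/t, -t/(1+t), -1/(1+t), -1-t}` for every `t ∉ {0, -1}`, and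
`d u = d (u + 1)` for all `u ∈ U`, then `d` is additive, hence a standard derivation. -/
theorem additive_of_leibniz_of_Ht_intersects
    (d : ℝ → ℝ) (hleib : ∀ x y : ℝ, d (x * y) = x * d y + y * d x)
    (U : Set ℝ)
    (hU : ∀ t : ℝ, t ≠ 0 → t ≠ -1 →
      (({t, 1 / t, -1 - 1 / t, -t / (1 + t), -1 / (1 + t), -1 - t} : Set ℝ) ∩ U).Nonempty)
    (hd : ∀ u ∈ U, d u = d (u + 1)) :
    ∀ x y : ℝ, d (x + y) = d x + d y := by
  have hd0 : d 0 = 0 := by have h := hleib 0 0; norm_num at h; linarith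
  have hd1 : d 1 = 0 := by have h := hleib 1 1; norm_num at h; linarith
  have hdneg1 : d (-1) = 0 := by
    have h := hleib (-1) (-1); norm_num at h; linarith
  have hneg : ∀ x : ℝ, d (-x) = - d x := by
    intro x
    have h := hleib (-1) x
    rw [hdneg1] at h
    simpa using h
  have hinv : ∀ t : ℝ, t ≠ 0 → d (1 / t) = - d t / t ^ 2 := by
    intro t ht
    have h := hleib t (1 / t)
    rw [mul_one_div_cancel ht, hd1] at h
    field_simp at h ⊢
    nlinarith [h]
  set f : ℝ → ℝ := fun x => d (x + 1) - d x with hf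
  have h1 : ∀ t : ℝ, t ≠ 0 → f (1 / t) = f t / t := by
    intro t ht
    have harg : (1 / t + 1 : ℝ) = (1 + t) * (1 / t) := by field_simp
    have h := hleib (1 + t) (1 / t)
    have hi := hinv t ht
    simp only [hf]
    rw [harg, h, hi]
    have h1t : (t + 1 : ℝ) = 1 + t := by ring
    rw [h1t]
    field_simp
    ring
  have h2 : ∀ t : ℝ, f (-1 - t) = f t := by
    intro t
    simp only [hf]
    have e1 : (-1 - t + 1 : ℝ) = -t := by ring
    have e2 : (-1 - t : ℝ) = -(1 + t) := by ring
    rw [e1, e2, hneg, hneg, add_comm t 1]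
    ring
  -- key: f t = 0 for all t
  have hfzero : ∀ t : ℝ, f t = 0 := by
    have hmain : ∀ t : ℝ, t ≠ 0 → t ≠ -1 → f t = 0 := by
      intro t ht ht1
      have h1t : (1 + t : ℝ) ≠ 0 := by
        intro h; apply ht1; linarith
      have hm1t : (-1 - t : ℝ) ≠ 0 := by
        intro h; apply ht1; linarith
      obtain ⟨u, humem, huU⟩ := hU t ht ht1
      have hfu : f u = 0 := by
        simp only [hf]
        have := hd u huU
        linarith
      simp only [Set.mem_insert_iff, Set.mem_singleton_iff] at humem
      rcases humem with h | h | h | h | h | h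
      · rw [h] at hfu; exact hfu
      · rw [h, h1 t ht] at hfu
        field_simp at hfu
        simpa using hfu
      · rw [h] at hfu
        have e : (-1 - 1 / t : ℝ) = -1 - (1 / t) := by ring
        rw [e, h2, h1 t ht] at hfu
        field_simp at hfu
        simpa using hfu
      · rw [h] at hfu
        have e : (-t / (1 + t) : ℝ) = -1 - (1 / (-1 - t)) := by
          field_simp
          ring
        rw [e, h2, h1 _ hm1t, h2] at hfu
        field_simp at hfu
        simpa using hfu
      · rw [h] at hfu
        have e : (-1 / (1 + t) : ℝ) = 1 / (-1 - t) := by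
          rw [div_eq_div_iff h1t hm1t]; ring
        rw [e, h1 _ hm1t, h2] at hfu
        field_simp at hfu
        simpa using hfu
      · rw [h, h2] at hfu; exact hfu
    intro t
    by_cases ht : t = 0
    · simp only [hf, ht, zero_add, hd0, hd1, sub_zero]
    by_cases ht1 : t = -1
    · simp only [hf, ht1]
      norm_num [hd0, hdneg1]
    exact hmain t ht ht1
  have hshift : ∀ t : ℝ, d (t + 1) = d t := by
    intro t
    have := hfzero t
    simp only [hf] at this
    linarith
  intro x y
  by_cases hx : x = 0
  · rw [hx, zero_add, hd0]; ring
  · have harg : x + y = x * (y / x + 1) := by field_simp; ring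
    rw [harg, hleib, hshift]
    have hyx : d (y / x) = y * (- d x / x ^ 2) + d y / x := by
      have e : (y / x : ℝ) = y * (1 / x) := by ring
      rw [e, hleib, hinv x hx]
      field_simp
    rw [hyx]
    field_simp
    ring
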